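/- arXiv:2206.10724 — 5 statements merged into one kernel-verified Lean document; each statement's English description precedes it below -/
import Mathlib

section
/- Let (f_n) be non-decreasing continuous functions on an interval satisfying (d⁺/dx) f_n(x) ≥ κ f_n(x) / ((1/n) ∑_{i=1}^n f_i(x))^γ with each f_n taking values in (0,1] and f_{n+1} ≤ f_n, and suppose x < y lie in the interval. Then f_n(x) ≤ f_n(y) · exp(−κ (y−x) / ((1/n) ∑_{i=1}^n f_i(y))^γ) for every n ≥ 1. -/
open Set Filter Topology

/-- The lower right Dini derivative `liminf_{ε↓0} (g(x+ε)-g(x))/ε`. -/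
noncomputable def lowerRightDini (g : ℝ → ℝ) (x : ℝ) : ℝ :=
  Filter.liminf (fun ε => (g (x + ε) - g x) / ε) (nhdsWithin (0:ℝ) (Set.Ioi 0))

theorem stmt2 (c1 c2 κ γ : ℝ) (hκ : 0 < κ) (hγ : γ ∈ Set.Ioc (0:ℝ) 1)
    (f : ℕ → ℝ → ℝ)
    (hmono : ∀ n, 1 ≤ n → MonotoneOn (f n) (Set.Icc c1 c2))
    (hcont : ∀ n, 1 ≤ n → ContinuousOn (f n) (Set.Icc c1 c2))
    (hrange : ∀ n, 1 ≤ n → ∀ x ∈ Set.Icc c1 c2, f n x ∈ Set.Ioc (0:ℝ) 1)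
    (hdec : ∀ n, 1 ≤ n → ∀ x ∈ Set.Icc c1 c2, f (n+1) x ≤ f n x)
    (hdiff : ∀ n, 1 ≤ n → ∀ x ∈ Set.Icc c1 c2,
      κ * f n x / (((n:ℝ)⁻¹ * ∑ i ∈ Finset.Icc 1 n, f i x) ^ γ) ≤ lowerRightDini (f n) x)
    (x y : ℝ) (hx : x ∈ Set.Icc c1 c2) (hy : y ∈ Set.Icc c1 c2) (hxy : x < y) :
    ∀ n : ℕ, 1 ≤ n →
      f n x ≤ f n y *
        Real.exp (-(κ * (y - x)) / (((n:ℝ)⁻¹ * ∑ i ∈ Finset.Icc 1 n, f i y) ^ γ)) := by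
  intro n hn
  have hsub : Set.Icc x y ⊆ Set.Icc c1 c2 := Icc_subset_Icc hx.1 hy.2
  -- the average S z
  set S : ℝ → ℝ := fun z => (n:ℝ)⁻¹ * ∑ i ∈ Finset.Icc 1 n, f i z with hS
  have hSpos : ∀ z ∈ Set.Icc c1 c2, 0 < S z := by
    intro z hz
    apply mul_pos (by positivity)
    apply Finset.sum_pos
    · intro i hi
      exact (hrange i (Finset.mem_Icc.1 hi).1 z hz).1
    · exact ⟨n, Finset.mem_Icc.2 ⟨hn, le_rfl⟩⟩
  have hSmono : ∀ z ∈ Set.Icc x y, S z ≤ S y := by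
    intro z hz
    apply mul_le_mul_of_nonneg_left _ (by positivity)
    apply Finset.sum_le_sum
    intro i hi
    exact hmono i (Finset.mem_Icc.1 hi).1 (hsub hz) hy hz.2
  set A : ℝ := S y ^ γ with hA
  have hApos : 0 < A := Real.rpow_pos_of_pos (hSpos y hy) γ
  set c : ℝ := κ / A with hc
  have hcpos : 0 < c := div_pos hκ hApos
  -- Dini derivative lower bound with constant A on [x,y]
  have hDini : ∀ z ∈ Set.Icc x y, c * f n z ≤ lowerRightDini (f n) z := by
    intro z hz
    have hz' := hsub hz
    have hfz : 0 < f n z := (hrange n hn z hz').1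
    have h1 : S z ^ γ ≤ A := Real.rpow_le_rpow (hSpos z hz').le (hSmono z hz) hγ.1.le
    have h2 : 0 < S z ^ γ := Real.rpow_pos_of_pos (hSpos z hz') γ
    have h3 : κ * f n z / A ≤ κ * f n z / S z ^ γ := by
      apply div_le_div_of_nonneg_left (by positivity) h2 h1
    calc c * f n z = κ * f n z / A := by rw [hc]; ring
      _ ≤ κ * f n z / S z ^ γ := h3
      _ ≤ lowerRightDini (f n) z := hdiff n hn z hz'
  -- main estimate for any c' < c
  have key : ∀ c' : ℝ, c' < c → f n x ≤ f n y * Real.exp (-(c' * (y - x))) := by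
    intro c' hc'
    set B : ℝ → ℝ := fun z => -(f n x * Real.exp (c' * (z - x))) with hB
    have hBderiv : ∀ z : ℝ, HasDerivAt B (-(c' * (f n x * Real.exp (c' * (z - x))))) z := by
      intro z
      have h1 : HasDerivAt (fun z : ℝ => c' * (z - x)) c' z := by
        simpa using ((hasDerivAt_id z).sub_const x).const_mul c'
      have h2 := (h1.exp).const_mul (f n x)
      have := h2.neg
      exact this.congr_deriv (by ring)
    have hfx : 0 < f n x := (hrange n hn x hx).1
    have main : ∀ ⦃z⦄, z ∈ Set.Icc x y → (fun w => -(f n w)) z ≤ B z := by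
      apply image_le_of_liminf_slope_right_lt_deriv_boundary
        (f' := fun z => -(c * f n z))
        (((hcont n hn).mono hsub).neg)
      · -- slope condition
        intro z hz r hr
        have hzIcc : z ∈ Set.Icc x y := Ico_subset_Icc_self hz
        have hz' := hsub hzIcc
        -- map the filter
        have hmap : Filter.map (fun ε => z + ε) (𝓝[>] (0:ℝ)) = 𝓝[>] z := by
          have := (Homeomorph.addLeft z).isEmbedding.map_nhdsWithin_eq (Set.Ioi 0) 0
          simpa [Set.image_const_add_Ioi] using this
        have hbd : ∀ᶠ ε in 𝓝[>] (0:ℝ), (0:ℝ) ≤ (f n (z + ε) - f n z) / ε := by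
          have hmem : Set.Ioo (0:ℝ) (c2 - z) ∈ 𝓝[>] (0:ℝ) :=
            Ioo_mem_nhdsGT_of_mem ⟨le_rfl, sub_pos.2 (lt_of_lt_of_le hz.2 hy.2)⟩
          filter_upwards [hmem] with ε hε
          have hzε : z + ε ∈ Set.Icc c1 c2 :=
            ⟨le_trans hz'.1 (by linarith [hε.1]), by linarith [hε.2]⟩
          have := hmono n hn hz' hzε (by linarith [hε.1])
          exact div_nonneg (by linarith) hε.1.le
        have hcob : (𝓝[>] (0:ℝ)).IsBoundedUnder (· ≥ ·)
            (fun ε => (f n (z + ε) - f n z) / ε) :=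
          ⟨0, Filter.eventually_map.mpr (hbd.mono fun ε h => h)⟩
        have hlt : -r < lowerRightDini (f n) z := by
          have := hDini z hzIcc
          nlinarith [(hrange n hn z hz').1]
        have hev : ∀ᶠ ε in 𝓝[>] (0:ℝ), -r < (f n (z + ε) - f n z) / ε :=
          Filter.eventually_lt_of_lt_liminf hlt hcob
        have hev2 : ∀ᶠ w in 𝓝[>] z, slope (fun w => -(f n w)) z w < r := by
          rw [← hmap, Filter.eventually_map]
          filter_upwards [hev, self_mem_nhdsWithin] with ε hε (hε0 : ε ∈ Set.Ioi 0)
          have hεne : ε ≠ 0 := ne_of_gt hε0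
          rw [slope_def_field, show z + ε - z = ε from by ring,
            show (-f n (z + ε) - -f n z) / ε = -((f n (z + ε) - f n z) / ε) from by ring]
          linarith
        exact hev2.frequently
      · simp [hB]
      · exact hBderiv
      · -- bound
        intro z hz heq
        have hzIcc : z ∈ Set.Icc x y := Ico_subset_Icc_self hz
        have hfz : 0 < f n z := (hrange n hn z (hsub hzIcc)).1
        have : f n z = f n x * Real.exp (c' * (z - x)) := by
          have := heq
          simp only [hB, Pi.neg_apply] at this
          linarith
        rw [← this]
        have : c' * f n z < c * f n z := by
          exact mul_lt_mul_of_pos_right hc' hfz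
        linarith
    have := main ⟨le_of_lt hxy, le_rfl⟩
    simp only [hB] at this
    have h2 : f n x * Real.exp (c' * (y - x)) ≤ f n y := by linarith
    rw [Real.exp_neg]
    have hepos := Real.exp_pos (c' * (y - x))
    calc f n x = f n x * Real.exp (c' * (y - x)) * (Real.exp (c' * (y - x)))⁻¹ := by
          field_simp
      _ ≤ f n y * (Real.exp (c' * (y - x)))⁻¹ :=
          mul_le_mul_of_nonneg_right h2 (by positivity)
  -- pass to the limit c' → c from the left
  have hgoal : f n x ≤ f n y * Real.exp (-(c * (y - x))) := by
    have htend : Filter.Tendsto (fun c' : ℝ => f n y * Real.exp (-(c' * (y - x))))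
        (𝓝[<] c) (𝓝 (f n y * Real.exp (-(c * (y - x))))) := by
      apply Filter.Tendsto.mono_left _ nhdsWithin_le_nhds
      exact (Continuous.mul continuous_const
        ((Real.continuous_exp).comp ((continuous_id.mul continuous_const).neg))).tendsto c
    refine ge_of_tendsto htend ?_
    filter_upwards [self_mem_nhdsWithin] with c' (hc' : c' < c)
    exact key c' hc'
  have : -(κ * (y - x)) / A = -(c * (y - x)) := by
    rw [hc]; field_simp
  rw [hA] at this
  rw [this]
  exact hgoal
end

section
/- Let (g_i)_{i≥0} be a sequence in (0,1/3] satisfying g_{i+1} ≤ g_i² for all i ≥ 0, and let (n_i) be defined by n_{i+1} = n_i · ⌊1/g_i⌋ with n_0 ≥ 1 an integer. Then for every i ≥ 2, g_{i-1}² ≤ g_0 n_0 / n_i. -/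
theorem stmt3 (g : ℕ → ℝ) (N : ℕ → ℕ)
    (hg : ∀ i, g i ∈ Set.Ioc (0:ℝ) (1/3))
    (hsq : ∀ i, g (i+1) ≤ (g i)^2)
    (hN0 : 1 ≤ N 0)
    (hNrec : ∀ i, N (i+1) = N i * ⌊(g i)⁻¹⌋₊) :
    ∀ i : ℕ, 2 ≤ i → (g (i-1))^2 ≤ g 0 * (N 0 : ℝ) / (N i : ℝ) := by
  have hgpos : ∀ i, 0 < g i := fun i => (hg i).1
  have hgle1 : ∀ i, g i ≤ 1 := fun i => le_trans (hg i).2 (by norm_num)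
  have A : ∀ k, (g k)^2 ≤ (∏ j ∈ Finset.range (k+1), g j) * g 0 := by
    intro k
    induction k with
    | zero => simp [pow_two]
    | succ k ih =>
      rw [Finset.prod_range_succ]
      have h1 : g (k+1) ≤ (∏ j ∈ Finset.range (k+1), g j) * g 0 :=
        le_trans (hsq k) ih
      calc (g (k+1))^2 = g (k+1) * g (k+1) := by ring
        _ ≤ g (k+1) * ((∏ j ∈ Finset.range (k+1), g j) * g 0) :=
            mul_le_mul_of_nonneg_left h1 (hgpos (k+1)).le
        _ = (∏ j ∈ Finset.range (k+1), g j) * g (k+1) * g 0 := by ring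
  have hNpos : ∀ i, 0 < N i := by
    intro i
    induction i with
    | zero => exact hN0
    | succ i ih =>
      rw [hNrec]
      refine Nat.mul_pos ih (Nat.floor_pos.mpr ?_)
      rw [one_le_inv_iff₀]
      exact ⟨hgpos i, hgle1 i⟩
  have B : ∀ i, (N i : ℝ) ≤ (N 0 : ℝ) * ∏ j ∈ Finset.range i, (g j)⁻¹ := by
    intro i
    induction i with
    | zero => simp
    | succ i ih =>
      rw [hNrec, Finset.prod_range_succ]
      push_cast
      calc (N i : ℝ) * (⌊(g i)⁻¹⌋₊ : ℝ)
          ≤ ((N 0 : ℝ) * ∏ j ∈ Finset.range i, (g j)⁻¹) * (g i)⁻¹ := by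
            exact mul_le_mul ih (Nat.floor_le (inv_nonneg.mpr (hgpos i).le))
              (Nat.cast_nonneg _)
              (mul_nonneg (Nat.cast_nonneg _)
                (Finset.prod_nonneg fun j _ => inv_nonneg.mpr (hgpos j).le))
        _ = (N 0 : ℝ) * ((∏ j ∈ Finset.range i, (g j)⁻¹) * (g i)⁻¹) := by ring
  intro i hi
  obtain ⟨k, rfl⟩ : ∃ k, i = k + 1 := ⟨i - 1, (Nat.succ_pred_eq_of_pos (by omega)).symm⟩
  simp only [Nat.add_sub_cancel]
  have hprodpos : (0:ℝ) < ∏ j ∈ Finset.range (k+1), g j :=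
    Finset.prod_pos fun j _ => hgpos j
  have hNp : (0:ℝ) < (N (k+1) : ℝ) := by exact_mod_cast hNpos (k+1)
  refine le_trans (A k) ?_
  rw [le_div_iff₀ hNp]
  calc (∏ j ∈ Finset.range (k+1), g j) * g 0 * (N (k+1) : ℝ)
      ≤ (∏ j ∈ Finset.range (k+1), g j) * g 0 *
          ((N 0 : ℝ) * ∏ j ∈ Finset.range (k+1), (g j)⁻¹) := by
        refine mul_le_mul_of_nonneg_left (B (k+1)) (mul_nonneg hprodpos.le (hgpos 0).le)
    _ = g 0 * (N 0 : ℝ) *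
          ((∏ j ∈ Finset.range (k+1), g j) * (∏ j ∈ Finset.range (k+1), g j)⁻¹) := by
        rw [Finset.prod_inv_distrib]; ring
    _ = g 0 * (N 0 : ℝ) := by rw [mul_inv_cancel₀ (ne_of_gt hprodpos), mul_one]
end

section
/- Let K_α(r) = (1/(1+r²))^{α/2} for α > 0. Then for every integer k ≥ 0, the k-th derivative satisfies K_α^{(k)}(x) ∼ (−1)^k (∏_{i=0}^{k−1} (α+i)) x^{−α−k} as x → ∞, i.e. the ratio of the two sides tends to 1. -/
open Filter Topology

lemma rep (α : ℝ) (k : ℕ) :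
    ∃ (ι : Type) (_ : Fintype ι) (c : ι → ℝ) (m e : ι → ℕ),
      (∀ j, c j = 0 ∨ m j + k = 2 * e j) ∧
      (∑ j, c j) = (-1:ℝ)^k * ∏ i ∈ Finset.range k, (α + i) ∧
      ∀ x : ℝ, iteratedDeriv k (fun r : ℝ => (1 + r^2) ^ (-(α/2))) x
        = ∑ j, c j * x ^ (m j) * (1 + x^2) ^ (-(α/2) - e j) := by
  induction k with
  | zero =>
      refine ⟨Unit, inferInstance, fun _ => 1, fun _ => 0, fun _ => 0, ?_, by simp, ?_⟩
      · intro j; right; rfl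
      · intro x; simp [iteratedDeriv_zero]
  | succ k ih =>
      obtain ⟨ι, _, c, m, e, hcon, hsum, hval⟩ := ih
      refine ⟨ι ⊕ ι, inferInstance,
        Sum.elim (fun j => c j * m j) (fun j => -(c j) * (α + 2 * e j)),
        Sum.elim (fun j => m j - 1) (fun j => m j + 1),
        Sum.elim (fun j => e j) (fun j => e j + 1), ?_, ?_, ?_⟩
      · rintro (j | j)
        · rcases eq_or_ne (c j) 0 with h | h
          · left; simp [h]
          · rcases eq_or_ne (m j) 0 with hm | hm
            · left; simp [hm]
            · right
              rcases hcon j with h0 | h0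
              · exact absurd h0 h
              · simp only [Sum.elim_inl]; omega
        · rcases eq_or_ne (c j) 0 with h | h
          · left; simp [h]
          · right
            rcases hcon j with h0 | h0
            · exact absurd h0 h
            · simp only [Sum.elim_inr]; omega
      · rw [Fintype.sum_sum_type]
        simp only [Sum.elim_inl, Sum.elim_inr]
        rw [← Finset.sum_add_distrib]
        have : ∀ j, c j * (m j : ℝ) + -(c j) * (α + 2 * e j) = c j * (-(α + k)) := by
          intro j
          rcases hcon j with h0 | h0
          · simp [h0]
          · have h1 : (m j : ℝ) + k = 2 * e j := by exact_mod_cast h0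
            linear_combination c j * h1
        rw [Finset.sum_congr rfl (fun j _ => this j), ← Finset.sum_mul, hsum,
          Finset.prod_range_succ]
        push_cast
        ring
      · intro x
        rw [iteratedDeriv_succ, funext hval]
        have hD : ∀ j : ι, HasDerivAt
            (fun x : ℝ => c j * x ^ (m j) * (1 + x^2) ^ (-(α/2) - e j))
            (c j * ((m j : ℝ) * x ^ (m j - 1)) * (1 + x^2) ^ (-(α/2) - e j)
              + (c j * x ^ (m j)) * ((2*x) * (-(α/2) - e j) * (1 + x^2) ^ ((-(α/2) - e j) - 1))) x := by
          intro j
          have hbase : HasDerivAt (fun x : ℝ => 1 + x^2) (2*x) x := by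
            simpa using ((hasDerivAt_pow 2 x).const_add 1)
          have h2 := hbase.rpow_const (p := -(α/2) - e j) (Or.inl (by positivity))
          exact ((hasDerivAt_pow (m j) x).const_mul (c j)).mul h2
        rw [(HasDerivAt.fun_sum (fun j _ => hD j)).deriv]
        rw [Fintype.sum_sum_type, ← Finset.sum_add_distrib]
        refine Finset.sum_congr rfl (fun j _ => ?_)
        simp only [Sum.elim_inl, Sum.elim_inr]
        have hexp : (-(α/2) - e j) - 1 = -(α/2) - ((e j + 1 : ℕ) : ℝ) := by push_cast; ring
        rw [hexp]
        push_cast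
        ring

lemma term_tendsto (α : ℝ) (k m e : ℕ) (c : ℝ) (h : c = 0 ∨ m + k = 2 * e) :
    Tendsto (fun x : ℝ => c * x ^ m * (1 + x^2) ^ (-(α/2) - e) / x ^ (-α - k))
      atTop (𝓝 c) := by
  rcases h with h | h
  · simpa [h] using tendsto_const_nhds
  · have hlim : Tendsto (fun x : ℝ => c * (1 + (x⁻¹)^2) ^ (-(α/2) - e)) atTop (𝓝 c) := by
      have h1 : Tendsto (fun x : ℝ => 1 + (x⁻¹)^2) atTop (𝓝 1) := by
        have := (tendsto_inv_atTop_zero (𝕜 := ℝ)).pow 2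
        simpa using ((tendsto_const_nhds (x := (1:ℝ))).add this)
      have h2 : ContinuousAt (fun t : ℝ => t ^ (-(α/2) - (e:ℝ))) 1 :=
        Real.continuousAt_rpow_const 1 _ (Or.inl one_ne_zero)
      have h3 := (h2.tendsto.comp h1)
      rw [Real.one_rpow] at h3
      simpa using tendsto_const_nhds.mul h3
    refine hlim.congr' ?_
    filter_upwards [eventually_gt_atTop (0:ℝ)] with x hx
    have hx2 : (0:ℝ) < x^2 := by positivity
    have key : (1 + (x⁻¹)^2) = (1 + x^2) / x^2 := by field_simp; ring
    rw [key, Real.div_rpow (by positivity) (le_of_lt hx2)]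
    rw [div_eq_mul_inv, ← Real.rpow_neg (le_of_lt hx2)]
    have hxx : (x^2) ^ (-(-(α/2) - (e:ℝ))) = x ^ ((α:ℝ) + 2*e) := by
      rw [← Real.rpow_natCast x 2, ← Real.rpow_mul hx.le]
      ring_nf
    rw [hxx]
    have hdiv : x ^ (-α - (k:ℝ)) = (x ^ ((α:ℝ) + k))⁻¹ := by
      rw [← Real.rpow_neg hx.le]; ring_nf
    rw [hdiv, div_inv_eq_mul]
    have hm : (x:ℝ) ^ m = x ^ ((m:ℕ):ℝ) := (Real.rpow_natCast x m).symm
    have hcomb : x ^ ((m:ℕ):ℝ) * x ^ ((α:ℝ) + k) = x ^ ((α:ℝ) + 2*e) := by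
      rw [← Real.rpow_add hx]
      congr 1
      have : (m:ℝ) + k = 2 * e := by exact_mod_cast h
      linarith
    rw [hm, ← hcomb]
    ring

theorem stmt4 (α : ℝ) (hα : 0 < α) (k : ℕ) :
    Tendsto (fun x : ℝ =>
        iteratedDeriv k (fun r : ℝ => (1 / (1 + r^2)) ^ (α/2)) x /
          ((-1:ℝ)^k * (∏ i ∈ Finset.range k, (α + i)) * x ^ (-α - k)))
      atTop (𝓝 1) := by
  have hfeq : (fun r : ℝ => (1 / (1 + r^2)) ^ (α/2)) = fun r : ℝ => (1 + r^2) ^ (-(α/2)) := by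
    funext r
    rw [one_div, Real.inv_rpow (by positivity), ← Real.rpow_neg (by positivity)]
  rw [hfeq]
  obtain ⟨ι, _, c, m, e, hcon, hsum, hval⟩ := rep α k
  set C : ℝ := (-1:ℝ)^k * ∏ i ∈ Finset.range k, (α + i) with hCdef
  have hC : C ≠ 0 := by
    apply mul_ne_zero (pow_ne_zero _ (by norm_num))
    exact ne_of_gt (Finset.prod_pos fun i _ => by positivity)
  have hterms : Tendsto
      (fun x : ℝ => (∑ j, c j * x ^ (m j) * (1 + x^2) ^ (-(α/2) - e j)) / x ^ (-α - (k:ℝ)))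
      atTop (𝓝 C) := by
    rw [← hsum]
    have h := tendsto_finset_sum Finset.univ
      (fun j (_ : j ∈ Finset.univ) => term_tendsto α k (m j) (e j) (c j) (hcon j))
    refine h.congr fun x => ?_
    rw [Finset.sum_div]
  have final := hterms.div_const C
  rw [div_self hC] at final
  refine final.congr fun x => ?_
  rw [hval x, div_div, mul_comm]
end

section
/- Potter's bounds: if w : ℝ⁺ → (0,∞) is regularly varying at infinity with index −ρ (ρ > 0), then for every δ > 0 there exists x₀ = x₀(δ) such that for all x, y ≥ x₀, w(y)/w(x) ≤ 2 max{(y/x)^{−ρ−δ}, (y/x)^{−ρ+δ}}. -/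
open Filter Topology MeasureTheory Set
open scoped ENNReal Pointwise

lemma unif_conv (K : ℝ → ℝ → ℝ)
    (hptw : ∀ t : ℝ, Tendsto (fun u => K u t) atTop (𝓝 0))
    (hmeas : ∀ u, Measurable (K u))
    (hadd : ∀ u t s, K u (t + s) = K u t + K (u + t) s) :
    ∀ ε > (0:ℝ), ∃ U : ℝ, ∀ u ≥ U, ∀ t ∈ Icc (0:ℝ) 1, |K u t| ≤ ε := by
  intro ε hε
  by_contra hcon
  push_neg at hcon
  choose u hu t ht hKε using fun n : ℕ => hcon n
  set v : ℕ → ℝ := fun n => if n % 2 = 0 then u (n / 2) else u (n / 2) + t (n / 2) with hv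
  have hvtop : Tendsto v atTop atTop := by
    have hdiv : Tendsto (fun n : ℕ => n / 2) atTop atTop := by
      rw [Filter.tendsto_atTop_atTop]
      intro b
      exact ⟨2 * b, fun a ha => by omega⟩
    have hbase : Tendsto (fun n : ℕ => ((n / 2 : ℕ) : ℝ)) atTop atTop :=
      tendsto_natCast_atTop_atTop.comp hdiv
    apply tendsto_atTop_mono _ hbase
    intro n
    by_cases h : n % 2 = 0
    · simpa [hv, h] using hu (n / 2)
    · have h1 := hu (n / 2)
      have h2 := (ht (n / 2)).1
      simp only [hv, h, if_neg]
      simp [h]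
      linarith
  have hF : ∀ s : ℝ, Tendsto (fun n => K (v n) s) atTop (𝓝 0) :=
    fun s => (hptw s).comp hvtop
  obtain ⟨T, hTsub, hTmeas, hTsmall, hTunif⟩ :=
    MeasureTheory.tendstoUniformlyOn_of_ae_tendsto
      (f := fun n => K (v n)) (g := fun _ => 0) (μ := volume) (s := Icc (0:ℝ) 2)
      (fun n => (hmeas (v n)).stronglyMeasurable)
      stronglyMeasurable_const measurableSet_Icc (by simp)
      (Filter.Eventually.of_forall fun x _ => hF x) (ε := 1/4) (by norm_num)
  set A := Icc (0:ℝ) 2 \ T with hA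
  have hAmeas : MeasurableSet A := measurableSet_Icc.diff hTmeas
  have hAsub : A ⊆ Icc (0:ℝ) 2 := diff_subset
  have hIccfin : volume (Icc (0:ℝ) 2) = ENNReal.ofReal 2 := by
    rw [Real.volume_Icc]; norm_num
  have hAfin : volume A ≠ ⊤ :=
    ((measure_mono hAsub).trans_lt (by rw [hIccfin]; exact ENNReal.ofReal_lt_top)).ne
  have hTfin : volume T ≠ ⊤ :=
    ((measure_mono hTsub).trans_lt (by rw [hIccfin]; exact ENNReal.ofReal_lt_top)).ne
  have hAvol : (7:ℝ)/4 ≤ (volume A).toReal := by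
    have h2 : volume (Icc (0:ℝ) 2) ≤ volume A + volume T :=
      (measure_mono (fun x hx => by by_cases h : x ∈ T <;> simp [hA, hx, h])).trans
        (measure_union_le _ _)
    have h2' : (2:ℝ) ≤ (volume A).toReal + (volume T).toReal := by
      have := ENNReal.toReal_mono (by finiteness) h2
      rwa [hIccfin, ENNReal.toReal_ofReal (by norm_num), ENNReal.toReal_add hAfin hTfin] at this
    have h3 : (volume T).toReal ≤ 1/4 :=
      ENNReal.toReal_le_of_le_ofReal (by norm_num) hTsmall
    linarith
  -- For each n, the set A ∩ (t n +ᵥ A) is nonempty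
  have hkey : ∀ n : ℕ, ∃ x, x ∈ A ∧ x - t n ∈ A := by
    intro n
    set B := (fun x : ℝ => x - t n) ⁻¹' A with hB
    have hBmeas : MeasurableSet B := hAmeas.preimage (measurable_sub_const (t n))
    have hBvol : volume B = volume A := by
      rw [hB]
      simp only [sub_eq_add_neg]
      exact measure_preimage_add_right volume (-(t n)) A
    have hBsub : B ⊆ Icc (0:ℝ) 3 := by
      intro x hx
      have h0 := hAsub hx
      simp only [mem_Icc] at h0 ⊢
      have h1 := (ht n).1; have h2 := (ht n).2
      constructor <;> linarith [h0.1, h0.2]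
    have hUsub : A ∪ B ⊆ Icc (0:ℝ) 3 := union_subset
      (hAsub.trans (Icc_subset_Icc le_rfl (by norm_num))) hBsub
    have hUfin : volume (A ∪ B) ≠ ⊤ := by
      refine ((measure_mono hUsub).trans_lt ?_).ne
      rw [Real.volume_Icc]; exact ENNReal.ofReal_lt_top
    have hUle : (volume (A ∪ B)).toReal ≤ 3 := by
      refine ENNReal.toReal_le_of_le_ofReal (by norm_num) ?_
      refine (measure_mono hUsub).trans ?_
      rw [Real.volume_Icc]; norm_num
    have hsum : volume (A ∪ B) + volume (A ∩ B) = volume A + volume B :=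
      measure_union_add_inter _ hBmeas
    have hIfin : volume (A ∩ B) ≠ ⊤ :=
      ((measure_mono inter_subset_left).trans_lt hAfin.lt_top).ne
    have hBfin : volume B ≠ ⊤ := by rw [hBvol]; exact hAfin
    have hsum' : (volume (A ∪ B)).toReal + (volume (A ∩ B)).toReal
        = (volume A).toReal + (volume B).toReal := by
      rw [← ENNReal.toReal_add hUfin hIfin, ← ENNReal.toReal_add hAfin hBfin, hsum]
    have hIpos : (0:ℝ) < (volume (A ∩ B)).toReal := by
      have : (volume B).toReal = (volume A).toReal := by rw [hBvol]
      linarith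
    have hne : (A ∩ B).Nonempty := by
      rcases (A ∩ B).eq_empty_or_nonempty with h | h
      · rw [h] at hIpos; simp at hIpos
      · exact h
    obtain ⟨x, hxA, hxB⟩ := hne
    exact ⟨x, hxA, hxB⟩
  -- contradiction
  rw [Metric.tendstoUniformlyOn_iff] at hTunif
  obtain ⟨N, hN⟩ := (eventually_atTop.mp (hTunif (ε/2) (by linarith)))
  obtain ⟨x, hxA, hxB⟩ := hkey N
  have hv1 : v (2*N) = u N := by simp [hv, Nat.mul_div_cancel_left]
  have hv2 : v (2*N+1) = u N + t N := by
    have h1 : (2*N+1) % 2 = 1 := by omega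
    have h2 : (2*N+1) / 2 = N := by omega
    simp [hv, h1, h2]
  have e1 : |K (u N) x| < ε/2 := by
    have := hN (2*N) (by omega) x hxA
    simpa [hv1, Real.dist_eq, abs_sub_comm] using this
  have e2 : |K (u N + t N) (x - t N)| < ε/2 := by
    have := hN (2*N+1) (by omega) (x - t N) hxB
    simpa [hv2, Real.dist_eq, abs_sub_comm] using this
  have key : K (u N) x = K (u N) (t N) + K (u N + t N) (x - t N) := by
    have := hadd (u N) (t N) (x - t N)
    simpa using this
  have : |K (u N) (t N)| < ε := by
    have : K (u N) (t N) = K (u N) x - K (u N + t N) (x - t N) := by linarith [key]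
    rw [this]
    calc |K (u N) x - K (u N + t N) (x - t N)|
        ≤ |K (u N) x| + |K (u N + t N) (x - t N)| := abs_sub _ _
      _ < ε/2 + ε/2 := by linarith
      _ = ε := by ring
  exact absurd this (not_lt.mpr (hKε N).le)

lemma chain_bound (K : ℝ → ℝ → ℝ)
    (hadd : ∀ u t s, K u (t + s) = K u t + K (u + t) s)
    (U ε : ℝ) (hε : 0 ≤ ε)
    (hbd : ∀ u ≥ U, ∀ t ∈ Icc (0:ℝ) 1, |K u t| ≤ ε) :
    ∀ n : ℕ, ∀ u, U ≤ u → ∀ s, 0 ≤ s → s ≤ (n:ℝ) + 1 → |K u s| ≤ ((n:ℝ) + 1) * ε := by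
  intro n
  induction n with
  | zero =>
    intro u hu s hs0 hs1
    simpa using hbd u hu s ⟨hs0, by simpa using hs1⟩
  | succ n ih =>
    intro u hu s hs0 hs1
    push_cast at hs1 ⊢
    by_cases h : s ≤ (n:ℝ) + 1
    · have h2 := ih u hu s hs0 h
      nlinarith
    · push_neg at h
      have h1 : K u s = K u 1 + K (u + 1) (s - 1) := by
        have h0 := hadd u 1 (s - 1)
        have : (1:ℝ) + (s - 1) = s := by ring
        rwa [this] at h0
      have b1 : |K u 1| ≤ ε := hbd u hu 1 ⟨zero_le_one, le_rfl⟩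
      have b2 : |K (u + 1) (s - 1)| ≤ ((n:ℝ) + 1) * ε :=
        ih (u + 1) (by linarith) (s - 1) (by linarith) (by linarith)
      calc |K u s| ≤ |K u 1| + |K (u + 1) (s - 1)| := h1 ▸ abs_add_le _ _
        _ ≤ ε + ((n:ℝ) + 1) * ε := add_le_add b1 b2
        _ = ((n:ℝ) + 1 + 1) * ε := by ring

theorem stmt8 (ρ : ℝ) (hρ : 0 < ρ) (w : ℝ → ℝ)
    (hw_meas : Measurable w)
    (hw_pos : ∀ᶠ x in atTop, 0 < w x)
    (hw_rv : ∀ v > (0:ℝ), Tendsto (fun u => w (u*v) / w u) atTop (𝓝 (v ^ (-ρ)))) :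
    ∀ δ > (0:ℝ), ∃ x₀ : ℝ, ∀ x y : ℝ, x₀ ≤ x → x₀ ≤ y →
      w y / w x ≤ 2 * max ((y/x) ^ (-ρ - δ)) ((y/x) ^ (-ρ + δ)) := by
  intro δ hδ
  set h : ℝ → ℝ := fun u => Real.log (w (Real.exp u)) with hh
  set K : ℝ → ℝ → ℝ := fun u t => h (u + t) - h u + ρ * t with hK
  have hadd : ∀ u t s, K u (t + s) = K u t + K (u + t) s := by
    intro u t s
    simp only [hK]
    ring_nf
  have hmeas : ∀ u, Measurable (K u) := by
    intro u
    have hmh : Measurable h :=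
      (Real.measurable_log.comp (hw_meas.comp Real.measurable_exp))
    exact ((hmh.comp (measurable_const.add measurable_id)).sub measurable_const).add
      (measurable_const.mul measurable_id)
  have hptw : ∀ t : ℝ, Tendsto (fun u => K u t) atTop (𝓝 0) := by
    intro t
    have h1 := hw_rv (Real.exp t) (Real.exp_pos t)
    have hL : (0:ℝ) < Real.exp t ^ (-ρ) := Real.rpow_pos_of_pos (Real.exp_pos t) _
    have h2 : Tendsto (fun x => Real.log (w (x * Real.exp t) / w x)) atTop
        (𝓝 (Real.log (Real.exp t ^ (-ρ)))) :=
      ((Real.continuousAt_log hL.ne').tendsto).comp h1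
    have hlog : Real.log (Real.exp t ^ (-ρ)) = -ρ * t := by
      rw [Real.log_rpow (Real.exp_pos t), Real.log_exp]
    rw [hlog] at h2
    have hpos2 : ∀ᶠ x in atTop, 0 < w (x * Real.exp t) := by
      have : Tendsto (fun x : ℝ => x * Real.exp t) atTop atTop :=
        Tendsto.atTop_mul_const (Real.exp_pos t) tendsto_id
      exact this.eventually hw_pos
    have heq : (fun x => Real.log (w (x * Real.exp t) / w x)) =ᶠ[atTop]
        (fun x => Real.log (w (x * Real.exp t)) - Real.log (w x)) := by
      filter_upwards [hw_pos, hpos2] with x hx hx2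
      exact Real.log_div hx2.ne' hx.ne'
    have h3 : Tendsto (fun x => Real.log (w (x * Real.exp t)) - Real.log (w x)) atTop
        (𝓝 (-ρ * t)) := h2.congr' heq
    have h4 : Tendsto (fun u => Real.log (w (Real.exp u * Real.exp t))
        - Real.log (w (Real.exp u))) atTop (𝓝 (-ρ * t)) :=
      h3.comp Real.tendsto_exp_atTop
    have h5 : Tendsto (fun u => h (u + t) - h u) atTop (𝓝 (-ρ * t)) := by
      refine h4.congr fun u => ?_
      simp only [hh, ← Real.exp_add]
    have := h5.add_const (ρ * t)
    simpa using this
  -- uniform bound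
  set ε := min δ (Real.log 2) with hε
  have hεpos : 0 < ε := lt_min hδ (Real.log_pos (by norm_num))
  obtain ⟨U, hU⟩ := unif_conv K hptw hmeas hadd ε hεpos
  obtain ⟨X, hX⟩ := eventually_atTop.mp hw_pos
  refine ⟨max (Real.exp U) (max X 1), fun x y hx hy => ?_⟩
  have hx1 : (1:ℝ) ≤ x := le_trans (le_max_of_le_right (le_max_right _ _)) hx
  have hy1 : (1:ℝ) ≤ y := le_trans (le_max_of_le_right (le_max_right _ _)) hy
  have hxpos : (0:ℝ) < x := lt_of_lt_of_le one_pos hx1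
  have hypos : (0:ℝ) < y := lt_of_lt_of_le one_pos hy1
  have hwx : 0 < w x := hX x (le_trans (le_max_of_le_right (le_max_left _ _)) hx)
  have hwy : 0 < w y := hX y (le_trans (le_max_of_le_right (le_max_left _ _)) hy)
  have hlogx : U ≤ Real.log x := by
    rw [← Real.log_exp U]
    exact Real.log_le_log (Real.exp_pos U) (le_trans (le_max_left _ _) hx)
  have hlogy : U ≤ Real.log y := by
    rw [← Real.log_exp U]
    exact Real.log_le_log (Real.exp_pos U) (le_trans (le_max_left _ _) hy)
  have hεδ : ε ≤ δ := min_le_left _ _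
  have hεl2 : ε ≤ Real.log 2 := min_le_right _ _
  -- helper: chain bound for arbitrary nonneg s
  have hchain : ∀ u, U ≤ u → ∀ s, 0 ≤ s → |K u s| ≤ (s + 1) * ε := by
    intro u hu s hs
    have h1 := chain_bound K hadd U ε hεpos.le hU (⌊s⌋₊) u hu s hs
      (le_of_lt (Nat.lt_floor_add_one s))
    have h2 : ((⌊s⌋₊ : ℝ) + 1) * ε ≤ (s + 1) * ε := by
      have := Nat.floor_le hs
      nlinarith
    linarith
  have hyx : (0:ℝ) < y / x := div_pos hypos hxpos
  rcases le_total x y with hc | hc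
  · -- y ≥ x : use exponent -ρ + δ
    set s := Real.log y - Real.log x with hs
    have hs0 : 0 ≤ s := by
      have := Real.log_le_log hxpos hc
      linarith
    have hb := hchain (Real.log x) hlogx s hs0
    have hKval : K (Real.log x) s = Real.log (w y) - Real.log (w x) + ρ * s := by
      simp only [hK, hh, hs]
      rw [show Real.log x + (Real.log y - Real.log x) = Real.log y by ring,
        Real.exp_log hypos, Real.exp_log hxpos]
    rw [hKval] at hb
    have hub : Real.log (w y) - Real.log (w x) ≤ (-ρ + δ) * s + Real.log 2 := by
      have h1 := (abs_le.mp hb).2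
      nlinarith
    have hfin : w y / w x ≤ 2 * (y/x) ^ (-ρ + δ) := by
      have e1 : w y / w x = Real.exp (Real.log (w y) - Real.log (w x)) := by
        rw [Real.exp_sub, Real.exp_log hwy, Real.exp_log hwx]
      have e2 : 2 * (y/x) ^ (-ρ + δ) = Real.exp ((-ρ + δ) * s + Real.log 2) := by
        rw [Real.rpow_def_of_pos hyx, Real.exp_add, Real.log_div hypos.ne' hxpos.ne']
        rw [Real.exp_log (by norm_num : (0:ℝ) < 2)]
        rw [hs]
        ring_nf
      rw [e1, e2]
      exact Real.exp_le_exp.mpr hub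
    calc w y / w x ≤ 2 * (y/x) ^ (-ρ + δ) := hfin
      _ ≤ 2 * max ((y/x) ^ (-ρ - δ)) ((y/x) ^ (-ρ + δ)) := by
          apply mul_le_mul_of_nonneg_left (le_max_right _ _) (by norm_num)
  · -- y ≤ x : use exponent -ρ - δ
    set s := Real.log x - Real.log y with hs
    have hs0 : 0 ≤ s := by
      have := Real.log_le_log hypos hc
      linarith
    have hb := hchain (Real.log y) hlogy s hs0
    have hKval : K (Real.log y) s = Real.log (w x) - Real.log (w y) + ρ * s := by
      simp only [hK, hh, hs]
      rw [show Real.log y + (Real.log x - Real.log y) = Real.log x by ring,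
        Real.exp_log hypos, Real.exp_log hxpos]
    rw [hKval] at hb
    have hub : Real.log (w y) - Real.log (w x) ≤ (ρ + δ) * s + Real.log 2 := by
      have h1 := (abs_le.mp hb).1
      nlinarith
    have hfin : w y / w x ≤ 2 * (y/x) ^ (-ρ - δ) := by
      have e1 : w y / w x = Real.exp (Real.log (w y) - Real.log (w x)) := by
        rw [Real.exp_sub, Real.exp_log hwy, Real.exp_log hwx]
      have e2 : 2 * (y/x) ^ (-ρ - δ) = Real.exp ((ρ + δ) * s + Real.log 2) := by
        rw [Real.rpow_def_of_pos hyx, Real.exp_add, Real.log_div hypos.ne' hxpos.ne']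
        rw [Real.exp_log (by norm_num : (0:ℝ) < 2)]
        rw [hs]
        ring_nf
      rw [e1, e2]
      exact Real.exp_le_exp.mpr hub
    calc w y / w x ≤ 2 * (y/x) ^ (-ρ - δ) := hfin
      _ ≤ 2 * max ((y/x) ^ (-ρ - δ)) ((y/x) ^ (-ρ + δ)) := by
          apply mul_le_mul_of_nonneg_left (le_max_left _ _) (by norm_num)
end

section
/- Let f be a stationary planar random field with positive associations (increasing events are positively correlated), whose law equals the law of −f. Let NodalArm(R) be the event that {f = 0} contains a path from Λ_{1/2} to ∂Λ_R and Arm(R) the event that {f ≥ 0} contains such a path. Then ℙ[NodalArm(R)] ≤ ℙ[Arm(R)]², and consequently if ℙ[NodalArm(R)] ≥ c R^{−1} for all R ≥ 1 then ℙ[Arm(R)] ≥ √c · R^{−1/2}. -/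
open MeasureTheory

theorem stmt16 {Ω : Type*} [MeasurableSpace Ω] [PartialOrder Ω]
    (μ : Measure Ω) [IsProbabilityMeasure μ]
    (NodalArm Arm ArmNeg : ℝ → Set Ω)
    (hmeas : ∀ R, MeasurableSet (Arm R) ∧ MeasurableSet (ArmNeg R) ∧
      MeasurableSet (NodalArm R))
    (hFKG : ∀ A B : Set Ω, IsUpperSet A → IsUpperSet B → μ A * μ B ≤ μ (A ∩ B))
    (hup : ∀ R, IsUpperSet (Arm R))
    (hdown : ∀ R, IsUpperSet (ArmNeg R)ᶜ)
    (hsym : ∀ R, μ (ArmNeg R) = μ (Arm R))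
    (hincl : ∀ R, NodalArm R ⊆ Arm R ∩ ArmNeg R) :
    (∀ R, μ (NodalArm R) ≤ μ (Arm R) ^ 2) ∧
    ∀ c > (0:ℝ), (∀ R : ℝ, 1 ≤ R → ENNReal.ofReal (c / R) ≤ μ (NodalArm R)) →
      ∀ R : ℝ, 1 ≤ R → ENNReal.ofReal (Real.sqrt c * R ^ (-(1/2) : ℝ)) ≤ μ (Arm R) := by
  have main : ∀ R, μ (NodalArm R) ≤ μ (Arm R) ^ 2 := by
    intro R
    have h1 : μ (NodalArm R) ≤ μ (Arm R ∩ ArmNeg R) := measure_mono (hincl R)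
    have h2 : μ (Arm R) * μ (ArmNeg R)ᶜ ≤ μ (Arm R ∩ (ArmNeg R)ᶜ) :=
      hFKG _ _ (hup R) (hdown R)
    have hsplit : μ (Arm R ∩ ArmNeg R) + μ (Arm R ∩ (ArmNeg R)ᶜ) = μ (Arm R) := by
      rw [← measure_inter_add_diff (Arm R) (hmeas R).2.1]
      rfl
    have hc : μ (ArmNeg R) + μ (ArmNeg R)ᶜ = 1 := by
      rw [add_comm]
      rw [measure_compl (hmeas R).2.1 (measure_ne_top μ _), measure_univ]
      exact tsub_add_cancel_of_le prob_le_one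
    have key : μ (Arm R ∩ ArmNeg R) + μ (Arm R) * μ (ArmNeg R)ᶜ
        ≤ μ (Arm R) * μ (ArmNeg R) + μ (Arm R) * μ (ArmNeg R)ᶜ := by
      calc μ (Arm R ∩ ArmNeg R) + μ (Arm R) * μ (ArmNeg R)ᶜ
          ≤ μ (Arm R ∩ ArmNeg R) + μ (Arm R ∩ (ArmNeg R)ᶜ) := by gcongr
        _ = μ (Arm R) := hsplit
        _ = μ (Arm R) * (μ (ArmNeg R) + μ (ArmNeg R)ᶜ) := by rw [hc, mul_one]
        _ = _ := by ring
    have hfin : μ (Arm R) * μ (ArmNeg R)ᶜ ≠ ⊤ :=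
      ENNReal.mul_ne_top (measure_ne_top μ _) (measure_ne_top μ _)
    have h3 : μ (Arm R ∩ ArmNeg R) ≤ μ (Arm R) * μ (ArmNeg R) :=
      (ENNReal.add_le_add_iff_right hfin).mp key
    calc μ (NodalArm R) ≤ μ (Arm R ∩ ArmNeg R) := h1
      _ ≤ μ (Arm R) * μ (ArmNeg R) := h3
      _ = μ (Arm R) ^ 2 := by rw [hsym R, sq]
  refine ⟨main, ?_⟩
  intro c hc hlb R hR
  have hRpos : (0:ℝ) < R := lt_of_lt_of_le one_pos hR
  have hsq : ENNReal.ofReal (c / R) ≤ μ (Arm R) ^ 2 :=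
    (hlb R hR).trans (main R)
  have heq : ENNReal.ofReal (Real.sqrt c * R ^ (-(1/2) : ℝ)) ^ 2
      = ENNReal.ofReal (c / R) := by
    rw [← ENNReal.ofReal_pow (by positivity)]
    congr 1
    rw [mul_pow, Real.sq_sqrt hc.le, ← Real.rpow_natCast (R ^ (-(1/2):ℝ)) 2,
      ← Real.rpow_mul hRpos.le]
    norm_num
    rw [Real.rpow_neg_one]
    ring
  by_contra hcon
  push_neg at hcon
  have : μ (Arm R) ^ 2 < ENNReal.ofReal (Real.sqrt c * R ^ (-(1/2) : ℝ)) ^ 2 :=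
    ENNReal.pow_lt_pow_left two_ne_zero hcon
  rw [heq] at this
  exact absurd hsq (not_le.mpr this)
end
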